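/- If G is a finite group with subgroups A, B satisfying AB ∩ BA = A ∪ B, and a ∈ A \ B, then the conjugate subgroup a⁻¹Ba intersected with B is contained in A ∩ B. -/
import Mathlib


open scoped Pointwise

/-- If `AB ∩ BA = A ∪ B` and `a ∈ A \ B`, then `a⁻¹Ba ∩ B ⊆ A ∩ B`. -/
theorem stmt1 {G : Type*} [Group G] (A B : Subgroup G)
    (h4 : ((A : Set G) * (B : Set G)) ∩ ((B : Set G) * (A : Set G)) =
      (A : Set G) ∪ (B : Set G))
    (a : G) (haA : a ∈ A) (haB : a ∉ B) :
    ((fun x => a⁻¹ * x * a) '' (B : Set G)) ∩ (B : Set G) ⊆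
      (A : Set G) ∩ (B : Set G) := by
  rintro x ⟨⟨b, hb, rfl⟩, hxB⟩
  dsimp only at hxB ⊢
  refine ⟨?_, hxB⟩
  have hmem : a * (a⁻¹ * b * a) ∈ ((A : Set G) * (B : Set G)) ∩ ((B : Set G) * (A : Set G)) := by
    constructor
    · exact Set.mul_mem_mul haA hxB
    · have : a * (a⁻¹ * b * a) = b * a := by group
      rw [this]
      exact Set.mul_mem_mul hb haA
  rw [h4] at hmem
  rcases hmem with h | h
  · have : (a⁻¹ * b * a) = a⁻¹ * (a * (a⁻¹ * b * a)) := by group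
    rw [this]
    exact mul_mem (inv_mem haA) h
  · exfalso
    apply haB
    have : a = (a * (a⁻¹ * b * a)) * (a⁻¹ * b * a)⁻¹ := by group
    rw [this]
    exact mul_mem h (inv_mem hxB)
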